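/- There exists an absolute constant C > 0 such that: for every finite symmetric set A' ⊂ ℤ\{0} and every t ∈ ℤ\{0}, writing A'_t := A' ∩ (A'+t) and B'_t := A'_t \ (−A'_t), one has ‖1̂_{B'_t}‖₁ ≤ C·‖1̂_{A'}‖₁³. -/

import Mathlib

/-- `e(x) = e^{2πix}`. -/
noncomputable def eC (x : ℝ) : ℂ := Complex.exp (2 * Real.pi * Complex.I * x)

/-- `1̂_A(x) = ∑_{a ∈ A} e(ax)`. -/
noncomputable def fhat (A : Finset ℤ) (x : ℝ) : ℂ := ∑ a ∈ A, eC ((a : ℝ) * x)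

/-- The translate `A + t`. -/
def shiftS (A : Finset ℤ) (t : ℤ) : Finset ℤ := A.image (· + t)

/-- The reflection `-A`. -/
def negS (A : Finset ℤ) : Finset ℤ := A.image (fun a => -a)

open MeasureTheory intervalIntegral

lemma continuous_eC : Continuous eC := by
  unfold eC; fun_prop

lemma continuous_fhat (A : Finset ℤ) : Continuous (fhat A) := by
  unfold fhat
  exact continuous_finset_sum _ fun a _ =>
    continuous_eC.comp (continuous_const.mul continuous_id)

lemma eC_add (x y : ℝ) : eC (x + y) = eC x * eC y := by
  unfold eC; rw [← Complex.exp_add]; push_cast; ring_nf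

lemma eC_int (n : ℤ) : eC ((n : ℤ) : ℝ) = 1 := by
  unfold eC
  rw [show (2 * (Real.pi : ℂ) * Complex.I * ((n : ℤ) : ℝ)) = (n : ℂ) * (2 * Real.pi * Complex.I) by
    push_cast; ring]
  exact Complex.exp_int_mul_two_pi_mul_I n

lemma abs_eC (x : ℝ) : ‖eC x‖ = 1 := by
  unfold eC
  rw [show (2 * (Real.pi : ℂ) * Complex.I * x) = ((2 * Real.pi * x : ℝ) : ℂ) * Complex.I by
    push_cast; ring]
  exact Complex.norm_exp_ofReal_mul_I _

lemma integral_eC (n : ℤ) :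
    (∫ x in (0:ℝ)..1, eC ((n : ℝ) * x)) = if n = 0 then 1 else 0 := by
  have h : ∀ x : ℝ, eC ((n : ℝ) * x) = Complex.exp ((2 * Real.pi * Complex.I * n) * x) := by
    intro x; unfold eC; push_cast; ring_nf
  rw [intervalIntegral.integral_congr (g := fun x : ℝ =>
    Complex.exp ((2 * Real.pi * Complex.I * n) * x)) (fun x _ => h x)]
  split_ifs with hn
  · subst hn; simp
  · have hc : (2 * (Real.pi : ℂ) * Complex.I * n) ≠ 0 := by
      simp [Real.pi_ne_zero, Complex.I_ne_zero, hn]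
    rw [integral_exp_mul_complex hc]
    have h1 : Complex.exp (2 * (Real.pi : ℂ) * Complex.I * n) = 1 := by
      rw [show (2 * (Real.pi : ℂ) * Complex.I * n) = (n : ℂ) * (2 * Real.pi * Complex.I) by
        ring]
      exact Complex.exp_int_mul_two_pi_mul_I n
    simp only [Complex.ofReal_one, Complex.ofReal_zero, mul_one, mul_zero, Complex.exp_zero, h1,
      sub_self, zero_div]

lemma fhat_coeff (B : Finset ℤ) (n : ℤ) :
    (∫ y in (0:ℝ)..1, fhat B y * eC (-((n : ℝ) * y))) = if n ∈ B then 1 else 0 := by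
  have h : ∀ y : ℝ, fhat B y * eC (-((n : ℝ) * y)) = ∑ b ∈ B, eC (((b - n : ℤ) : ℝ) * y) := by
    intro y
    unfold fhat
    rw [Finset.sum_mul]
    refine Finset.sum_congr rfl fun b _ => ?_
    rw [← eC_add]; congr 1; push_cast; ring
  rw [intervalIntegral.integral_congr (fun y _ => h y),
    intervalIntegral.integral_finset_sum (f := fun b (y : ℝ) => eC (((b - n : ℤ) : ℝ) * y))
      (fun b _ => Continuous.intervalIntegrable
        (by exact continuous_eC.comp (continuous_const.mul continuous_id)) 0 1)]
  simp_rw [integral_eC, sub_eq_zero]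
  rw [Finset.sum_ite_eq' B n (fun _ => (1 : ℂ))]

lemma fhat_inter_eq (A B : Finset ℤ) (x : ℝ) :
    fhat (A ∩ B) x = ∫ y in (0:ℝ)..1, fhat B y * fhat A (x - y) := by
  have h : ∀ y : ℝ, fhat B y * fhat A (x - y)
      = ∑ a ∈ A, eC ((a : ℝ) * x) * (fhat B y * eC (-((a : ℝ) * y))) := by
    intro y
    conv_lhs => rw [show fhat A (x - y) = ∑ a ∈ A, eC ((a : ℝ) * (x - y)) from rfl]
    rw [Finset.mul_sum]
    refine Finset.sum_congr rfl fun a _ => ?_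
    rw [show (a : ℝ) * (x - y) = (a : ℝ) * x + -((a : ℝ) * y) by ring, eC_add]
    ring
  rw [intervalIntegral.integral_congr (fun y _ => h y),
    intervalIntegral.integral_finset_sum
      (f := fun (a : ℤ) (y : ℝ) => eC ((a : ℝ) * x) * (fhat B y * eC (-((a : ℝ) * y))))
      (fun a _ => (Continuous.intervalIntegrable (by
        exact continuous_const.mul ((continuous_fhat B).mul
          (continuous_eC.comp (continuous_const.mul continuous_id).neg))) 0 1))]
  simp_rw [intervalIntegral.integral_const_mul, fhat_coeff]
  unfold fhat
  rw [← Finset.sum_ite_mem A B (fun a => eC ((a : ℝ) * x))]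
  refine Finset.sum_congr rfl fun a _ => ?_
  split_ifs <;> simp

lemma cont_abs_fhat (A : Finset ℤ) : Continuous fun x => ‖fhat A x‖ :=
  continuous_norm.comp (continuous_fhat A)

lemma abs_fhat_periodic (A : Finset ℤ) :
    Function.Periodic (fun x => ‖fhat A x‖) 1 := by
  intro x
  simp only
  congr 1
  unfold fhat
  refine Finset.sum_congr rfl fun a _ => ?_
  rw [mul_add, mul_one, eC_add, eC_int, mul_one]

lemma L_shift (A : Finset ℤ) (t : ℤ) :
    (∫ x in (0:ℝ)..1, ‖fhat (shiftS A t) x‖)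
      = ∫ x in (0:ℝ)..1, ‖fhat A x‖ := by
  refine intervalIntegral.integral_congr fun x _ => ?_
  have h : fhat (shiftS A t) x = eC ((t : ℝ) * x) * fhat A x := by
    unfold fhat shiftS
    rw [Finset.sum_image (fun a _ b _ h => by omega), Finset.mul_sum]
    refine Finset.sum_congr rfl fun a _ => ?_
    rw [← eC_add]; congr 1; push_cast; ring
  rw [h, norm_mul, abs_eC, one_mul]

lemma L_nonneg (A : Finset ℤ) : 0 ≤ ∫ x in (0:ℝ)..1, ‖fhat A x‖ :=
  intervalIntegral.integral_nonneg zero_le_one (fun x _ => norm_nonneg _)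

lemma one_le_L {A : Finset ℤ} (hA : A.Nonempty) :
    1 ≤ ∫ x in (0:ℝ)..1, ‖fhat A x‖ := by
  obtain ⟨a0, ha0⟩ := hA
  have key : (∫ x in (0:ℝ)..1, fhat A x * eC (-((a0 : ℝ) * x))) = 1 := by
    rw [fhat_coeff]; simp [ha0]
  calc (1 : ℝ) = ‖∫ x in (0:ℝ)..1, fhat A x * eC (-((a0 : ℝ) * x))‖ := by
        rw [key]; simp
    _ ≤ ∫ x in (0:ℝ)..1, ‖fhat A x * eC (-((a0 : ℝ) * x))‖ :=
        intervalIntegral.norm_integral_le_integral_norm zero_le_one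
    _ = ∫ x in (0:ℝ)..1, ‖fhat A x‖ := by
        refine intervalIntegral.integral_congr fun x _ => ?_
        rw [norm_mul, abs_eC, mul_one]

lemma l1_inter (A B : Finset ℤ) :
    (∫ x in (0:ℝ)..1, ‖fhat (A ∩ B) x‖) ≤
      (∫ x in (0:ℝ)..1, ‖fhat A x‖) *
        (∫ x in (0:ℝ)..1, ‖fhat B x‖) := by
  set LA := ∫ x in (0:ℝ)..1, ‖fhat A x‖ with hLA
  set μ := volume.restrict (Set.Ioc (0:ℝ) 1) with hμ
  set F : ℝ × ℝ → ℝ := fun p => ‖fhat B p.2‖ * ‖fhat A (p.1 - p.2)‖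
    with hFdef
  have hFcont : Continuous F :=
    (continuous_norm.comp ((continuous_fhat B).comp continuous_snd)).mul
      (continuous_norm.comp ((continuous_fhat A).comp (continuous_fst.sub continuous_snd)))
  have hF : Integrable F (μ.prod μ) := by
    rw [hμ, Measure.prod_restrict]
    refine IntegrableOn.mono_set ?_
      (Set.prod_mono Set.Ioc_subset_Icc_self Set.Ioc_subset_Icc_self)
    have : IntegrableOn F (Set.Icc (0:ℝ) 1 ×ˢ Set.Icc (0:ℝ) 1) volume :=
      hFcont.continuousOn.integrableOn_compact (isCompact_Icc.prod isCompact_Icc)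
    rwa [Measure.volume_eq_prod] at this
  -- pointwise bound
  have key : ∀ x : ℝ, ‖fhat (A ∩ B) x‖ ≤ ∫ y, F (x, y) ∂μ := by
    intro x
    have h1 : ‖fhat (A ∩ B) x‖
        ≤ ∫ y in (0:ℝ)..1, ‖fhat B y * fhat A (x - y)‖ := by
      rw [fhat_inter_eq]
      exact intervalIntegral.norm_integral_le_integral_norm zero_le_one
    refine h1.trans (le_of_eq ?_)
    rw [intervalIntegral.integral_of_le zero_le_one]
    refine setIntegral_congr_fun measurableSet_Ioc fun y _ => ?_
    simp [hFdef]
  -- inner integral after swapping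
  have inner : ∀ y : ℝ, (∫ x, F (x, y) ∂μ) = ‖fhat B y‖ * LA := by
    intro y
    have : (∫ x, F (x, y) ∂μ)
        = ∫ x in (0:ℝ)..1, ‖fhat B y‖ * ‖fhat A (x - y)‖ := by
      rw [intervalIntegral.integral_of_le zero_le_one]
    rw [this, intervalIntegral.integral_const_mul]
    congr 1
    rw [intervalIntegral.integral_comp_sub_right (fun x => ‖fhat A x‖) y]
    have h2 := (abs_fhat_periodic A).intervalIntegral_add_eq (0 - y) 0
    rw [show (0 : ℝ) - y + 1 = 1 - y by ring, zero_add] at h2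
    rw [h2]
  calc (∫ x in (0:ℝ)..1, ‖fhat (A ∩ B) x‖)
      = ∫ x, ‖fhat (A ∩ B) x‖ ∂μ := by
        rw [intervalIntegral.integral_of_le zero_le_one, hμ]
    _ ≤ ∫ x, (∫ y, F (x, y) ∂μ) ∂μ := by
        refine integral_mono ?_ hF.integral_prod_left (fun x => key x)
        · rw [hμ]; exact (cont_abs_fhat (A ∩ B)).integrableOn_Ioc
    _ = ∫ y, (∫ x, F (x, y) ∂μ) ∂μ := integral_integral_swap hF
    _ = ∫ y, ‖fhat B y‖ * LA ∂μ := by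
        exact integral_congr_ae (Filter.Eventually.of_forall fun y => inner y)
    _ = (∫ y, ‖fhat B y‖ ∂μ) * LA := integral_mul_const LA _
    _ = LA * ∫ x in (0:ℝ)..1, ‖fhat B x‖ := by
        rw [intervalIntegral.integral_of_le zero_le_one, hμ, mul_comm]

lemma mem_shiftS {A : Finset ℤ} {t n : ℤ} : n ∈ shiftS A t ↔ n - t ∈ A := by
  simp only [shiftS, Finset.mem_image]
  constructor
  · rintro ⟨a, ha, rfl⟩; simpa using ha
  · intro h; exact ⟨n - t, h, by ring⟩

lemma mem_negS {A : Finset ℤ} {n : ℤ} : n ∈ negS A ↔ -n ∈ A := by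
  simp only [negS, Finset.mem_image]
  constructor
  · rintro ⟨a, ha, rfl⟩; simpa using ha
  · intro h; exact ⟨-n, h, by ring⟩

/-- `‖1̂_{B'_t}‖₁ ≪ ‖1̂_{A'}‖₁³` where `B'_t = (A' ∩ (A'+t)) \ (-(A' ∩ (A'+t)))`. -/
theorem l1_bound_Bt :
    ∃ C : ℝ, 0 < C ∧
      ∀ A' : Finset ℤ, (0 : ℤ) ∉ A' → (∀ a : ℤ, a ∈ A' ↔ -a ∈ A') →
        ∀ t : ℤ, t ≠ 0 →
          (∫ x in (0:ℝ)..1,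
              ‖fhat ((A' ∩ shiftS A' t) \ negS (A' ∩ shiftS A' t)) x‖) ≤
            C * (∫ x in (0:ℝ)..1, ‖fhat A' x‖) ^ 3 := by
  refine ⟨2, by norm_num, ?_⟩
  intro A hA0 hsym t ht
  set L := ∫ x in (0:ℝ)..1, ‖fhat A x‖ with hL
  set S := A ∩ shiftS A t with hS
  have hnegS : negS S = A ∩ shiftS A (-t) := by
    ext n
    simp only [hS, Finset.mem_inter, mem_negS, mem_shiftS]
    rw [show -n - t = -(n + t) by ring, ← hsym (n + t), ← hsym n, show n - -t = n + t by ring]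
  have hSinter : S ∩ negS S = S ∩ shiftS A (-t) := by
    rw [hnegS]
    ext n
    simp only [hS, Finset.mem_inter]
    tauto
  have hS1 : (∫ x in (0:ℝ)..1, ‖fhat S x‖) ≤ L * L := by
    refine (l1_inter A (shiftS A t)).trans (le_of_eq ?_)
    rw [L_shift]
  have hST : (∫ x in (0:ℝ)..1, ‖fhat (S ∩ negS S) x‖) ≤ L * L * L := by
    rw [hSinter]
    calc (∫ x in (0:ℝ)..1, ‖fhat (S ∩ shiftS A (-t)) x‖)
        ≤ (∫ x in (0:ℝ)..1, ‖fhat S x‖) *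
            (∫ x in (0:ℝ)..1, ‖fhat (shiftS A (-t)) x‖) := l1_inter _ _
      _ = (∫ x in (0:ℝ)..1, ‖fhat S x‖) * L := by rw [L_shift]
      _ ≤ L * L * L := mul_le_mul_of_nonneg_right hS1 (L_nonneg A)
  have hsplit : ∀ x : ℝ, fhat (S \ negS S) x = fhat S x - fhat (S ∩ negS S) x := by
    intro x
    have hd : Disjoint (S \ negS S) (S ∩ negS S) := by
      refine Finset.disjoint_left.mpr fun a ha hb => ?_
      simp only [Finset.mem_sdiff, Finset.mem_inter] at ha hb
      exact ha.2 hb.2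
    have hu : (S \ negS S) ∪ (S ∩ negS S) = S := Finset.sdiff_union_inter S (negS S)
    have h3 : fhat (S \ negS S) x + fhat (S ∩ negS S) x = fhat S x := by
      unfold fhat
      rw [← Finset.sum_union hd, hu]
    rw [← h3]; ring
  have hB : (∫ x in (0:ℝ)..1, ‖fhat (S \ negS S) x‖)
      ≤ (∫ x in (0:ℝ)..1, ‖fhat S x‖) +
        (∫ x in (0:ℝ)..1, ‖fhat (S ∩ negS S) x‖) := by
    have h1 : (∫ x in (0:ℝ)..1, ‖fhat (S \ negS S) x‖)
        ≤ ∫ x in (0:ℝ)..1, (‖fhat S x‖ + ‖fhat (S ∩ negS S) x‖) := by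
      refine intervalIntegral.integral_mono_on zero_le_one
        ((cont_abs_fhat _).intervalIntegrable 0 1)
        (((cont_abs_fhat _).add (cont_abs_fhat _)).intervalIntegrable 0 1)
        (fun x _ => ?_)
      rw [hsplit x]
      simpa using norm_sub_le (fhat S x) (fhat (S ∩ negS S) x)
    rw [intervalIntegral.integral_add
      ((cont_abs_fhat _).intervalIntegrable 0 1)
      ((cont_abs_fhat _).intervalIntegrable 0 1)] at h1
    exact h1
  rcases A.eq_empty_or_nonempty with rfl | hne
  · have hSempty : S = ∅ := by simp [hS]
    rw [hSempty]
    simp only [Finset.empty_sdiff]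
    have : (∫ x in (0:ℝ)..1, ‖fhat (∅ : Finset ℤ) x‖) = 0 := by
      simp [fhat]
    rw [this]
    have : L = 0 := by simp [hL, fhat]
    rw [this]
    norm_num
  · have h1 : 1 ≤ L := one_le_L hne
    have := hB.trans (add_le_add hS1 hST)
    nlinarith [L_nonneg A]
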